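/- Let f : ℝ → ℝ be continuous and bounded below by an affine function, with convex envelope f**. Then inf over all integrable functions m : [-1/2,1/2)^d → ℝ (taking values in the domain of f) with ∫ m(x) dx = m̄ of ∫ f(m(x)) dx equals f**(m̄). -/

import Mathlib

open MeasureTheory

/-- The unit cell `[-1/2, 1/2)^d` of the torus. -/
noncomputable def unitBox (d : ℕ) : Set (Fin d → ℝ) :=
  Set.univ.pi fun _ => Set.Ico (-(1 / 2) : ℝ) (1 / 2)

/-- The convex envelope of `f`: the largest convex function not exceeding `f`. -/
noncomputable def convEnv (f : ℝ → ℝ) (m : ℝ) : ℝ :=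
  sSup {y : ℝ | ∃ g : ℝ → ℝ, ConvexOn ℝ Set.univ g ∧ (∀ x, g x ≤ f x) ∧ y = g m}


lemma convex_comb_aux (lam V1 V2 : ℝ) (h0 : 0 ≤ lam) (h1 : lam ≤ 1) (hc : V1 ≤ V2) :
    V1 ≤ lam * V1 + (1 - lam) * V2 := by nlinarith

lemma convex_comb_aux' (lam V1 V2 : ℝ) (h0 : 0 ≤ lam) (h1 : lam ≤ 1) (hc : V2 ≤ V1) :
    V2 ≤ lam * V1 + (1 - lam) * V2 := by nlinarith

lemma reduce3left (f : ℝ → ℝ) (p q r m α β γ : ℝ) (hpq : p ≤ q) (hqr : q ≤ r)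
    (hα : 0 ≤ α) (hβ : 0 ≤ β) (hγ : 0 ≤ γ) (hsum : α + β + γ = 1)
    (hm : α * p + β * q + γ * r = m) (hmq : m ≤ q) :
    ∃ θ a b, 0 ≤ θ ∧ θ ≤ 1 ∧ θ * a + (1 - θ) * b = m ∧
      θ * f a + (1 - θ) * f b ≤ α * f p + β * f q + γ * f r := by
  have hmp0 : m - p = β * (q - p) + γ * (r - p) := by linear_combination -hm + p * hsum
  have hpm : p ≤ m := by nlinarith [mul_nonneg hβ (sub_nonneg.2 hpq), mul_nonneg hγ (sub_nonneg.2 (hpq.trans hqr))]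
  rcases eq_or_lt_of_le hpm with he | hlt
  · -- m = p
    refine ⟨1, m, m, by norm_num, le_refl 1, by ring, ?_⟩
    have h1 : β * (q - p) + γ * (r - p) = 0 := by linarith
    have h2 : β * (q - p) = 0 := by nlinarith
    have h3 : γ * (r - p) = 0 := by nlinarith
    have hq : β * f q = β * f p := by
      rcases mul_eq_zero.1 h2 with h | h
      · simp [h]
      · have : q = p := by linarith
        rw [this]
    have hr : γ * f r = γ * f p := by
      rcases mul_eq_zero.1 h3 with h | h
      · simp [h]
      · have : r = p := by linarith
        rw [this]
    have hfm : f m = f p := by rw [← he]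
    have key : α * f p + β * f q + γ * f r = f p := by
      linear_combination hq + hr + f p * hsum
    linarith
  · -- p < m
    have hpq' : p < q := lt_of_lt_of_le hlt hmq
    have hpr : p < r := lt_of_lt_of_le hpq' hqr
    have hmp : m - p = β * (q - p) + γ * (r - p) := hmp0
    have hmlt : 0 < m - p := by linarith
    set u : ℝ := (r - m) / (r - p) with hu
    set t : ℝ := (q - m) / (q - p) with ht
    set lam : ℝ := γ * (r - p) / (m - p) with hlam
    have hu0 : 0 ≤ u := div_nonneg (by linarith) (by linarith)
    have hu1 : u ≤ 1 := by rw [hu, div_le_one (by linarith)]; linarith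
    have ht0 : 0 ≤ t := div_nonneg (by linarith) (by linarith)
    have ht1 : t ≤ 1 := by rw [ht, div_le_one (by linarith)]; linarith
    have hlam0 : 0 ≤ lam := div_nonneg (mul_nonneg hγ (by linarith)) hmlt.le
    have hlam1 : lam ≤ 1 := by
      rw [hlam, div_le_one hmlt]
      nlinarith [mul_nonneg hβ (sub_nonneg.2 hpq)]
    have hne1 : m - p ≠ 0 := ne_of_gt hmlt
    have hne2 : r - p ≠ 0 := ne_of_gt (by linarith)
    have hne3 : q - p ≠ 0 := ne_of_gt (by linarith)
    have hC : lam * (1 - u) = γ := by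
      rw [hlam, hu]; field_simp; ring
    have e1 : 1 - t = (m - p) / (q - p) := by
      rw [ht, eq_div_iff hne3]; field_simp; ring
    have e2 : 1 - lam = β * (q - p) / (m - p) := by
      rw [hlam, eq_div_iff hne1, sub_mul, div_mul_cancel₀ _ hne1]
      linear_combination hmp
    have hB : (1 - lam) * (1 - t) = β := by
      rw [e2, e1, div_mul_div_comm, div_eq_iff (mul_ne_zero hne1 hne3)]; ring
    have hA : lam * u + (1 - lam) * t = α := by
      linear_combination -hB - hC - hsum
    have hval : α * f p + β * f q + γ * f r
        = lam * (u * f p + (1 - u) * f r) + (1 - lam) * (t * f p + (1 - t) * f q) := by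
      linear_combination (-(f p)) * hA - f q * hB - f r * hC
    have hmu : u * p + (1 - u) * r = m := by rw [hu]; field_simp; ring
    have hmt : t * p + (1 - t) * q = m := by rw [ht]; field_simp; ring
    clear_value u t lam
    set V1 : ℝ := u * f p + (1 - u) * f r with hV1
    set V2 : ℝ := t * f p + (1 - t) * f q with hV2
    clear_value V1 V2
    rcases le_total V1 V2 with hc | hc
    · refine ⟨u, p, r, hu0, hu1, hmu, ?_⟩
      have key : V1 ≤ lam * V1 + (1 - lam) * V2 := convex_comb_aux lam V1 V2 hlam0 hlam1 hc
      rw [← hV1]; linarith [hval, key]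
    · refine ⟨t, p, q, ht0, ht1, hmt, ?_⟩
      have key : V2 ≤ lam * V1 + (1 - lam) * V2 := convex_comb_aux' lam V1 V2 hlam0 hlam1 hc
      rw [← hV2]; linarith [hval, key]

lemma reduce3sorted (f : ℝ → ℝ) (p q r m α β γ : ℝ) (hpq : p ≤ q) (hqr : q ≤ r)
    (hα : 0 ≤ α) (hβ : 0 ≤ β) (hγ : 0 ≤ γ) (hsum : α + β + γ = 1)
    (hm : α * p + β * q + γ * r = m) :
    ∃ θ a b, 0 ≤ θ ∧ θ ≤ 1 ∧ θ * a + (1 - θ) * b = m ∧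
      θ * f a + (1 - θ) * f b ≤ α * f p + β * f q + γ * f r := by
  rcases le_total m q with h | h
  · exact reduce3left f p q r m α β γ hpq hqr hα hβ hγ hsum hm h
  · obtain ⟨θ, a, b, h0, h1, h2, h3⟩ :=
      reduce3left (fun x => f (-x)) (-r) (-q) (-p) (-m) γ β α (by linarith) (by linarith)
        hγ hβ hα (by linarith) (by linarith) (by linarith)
    simp only [neg_neg] at h3
    exact ⟨θ, -a, -b, h0, h1, by linear_combination -h2, by linarith⟩

lemma reduce3 (f : ℝ → ℝ) (p q r m α β γ : ℝ)
    (hα : 0 ≤ α) (hβ : 0 ≤ β) (hγ : 0 ≤ γ) (hsum : α + β + γ = 1)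
    (hm : α * p + β * q + γ * r = m) :
    ∃ θ a b, 0 ≤ θ ∧ θ ≤ 1 ∧ θ * a + (1 - θ) * b = m ∧
      θ * f a + (1 - θ) * f b ≤ α * f p + β * f q + γ * f r := by
  rcases le_total p q with h1 | h1 <;> rcases le_total q r with h2 | h2 <;>
    rcases le_total p r with h3 | h3
  · exact reduce3sorted f p q r m α β γ h1 h2 hα hβ hγ hsum hm
  · exact reduce3sorted f p q r m α β γ h1 h2 hα hβ hγ hsum hm
  · obtain ⟨θ, a, b, c0, c1, c2, c3⟩ :=
      reduce3sorted f p r q m α γ β h3 h2 hα hγ hβ (by linarith) (by linarith)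
    exact ⟨θ, a, b, c0, c1, c2, by linarith⟩
  · obtain ⟨θ, a, b, c0, c1, c2, c3⟩ :=
      reduce3sorted f r p q m γ α β h3 h1 hγ hα hβ (by linarith) (by linarith)
    exact ⟨θ, a, b, c0, c1, c2, by linarith⟩
  · obtain ⟨θ, a, b, c0, c1, c2, c3⟩ :=
      reduce3sorted f q p r m β α γ h1 h3 hβ hα hγ (by linarith) (by linarith)
    exact ⟨θ, a, b, c0, c1, c2, by linarith⟩
  · obtain ⟨θ, a, b, c0, c1, c2, c3⟩ :=
      reduce3sorted f q r p m β γ α h2 h3 hβ hγ hα (by linarith) (by linarith)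
    exact ⟨θ, a, b, c0, c1, c2, by linarith⟩
  · obtain ⟨θ, a, b, c0, c1, c2, c3⟩ :=
      reduce3sorted f r q p m γ β α h2 h1 hγ hβ hα (by linarith) (by linarith)
    exact ⟨θ, a, b, c0, c1, c2, by linarith⟩
  · obtain ⟨θ, a, b, c0, c1, c2, c3⟩ :=
      reduce3sorted f r q p m γ β α h2 h1 hγ hβ hα (by linarith) (by linarith)
    exact ⟨θ, a, b, c0, c1, c2, by linarith⟩

lemma reduce4 (f : ℝ → ℝ) (x1 x2 x3 x4 m a1 a2 a3 a4 : ℝ)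
    (h1 : 0 ≤ a1) (h2 : 0 ≤ a2) (h3 : 0 ≤ a3) (h4 : 0 ≤ a4)
    (hsum : a1 + a2 + a3 + a4 = 1)
    (hm : a1 * x1 + a2 * x2 + a3 * x3 + a4 * x4 = m) :
    ∃ θ a b, 0 ≤ θ ∧ θ ≤ 1 ∧ θ * a + (1 - θ) * b = m ∧
      θ * f a + (1 - θ) * f b ≤ a1 * f x1 + a2 * f x2 + a3 * f x3 + a4 * f x4 := by
  rcases eq_or_lt_of_le (by positivity : (0:ℝ) ≤ a1 + a2 + a3) with hσ | hσ
  · have e1 : a1 = 0 := by linarith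
    have e2 : a2 = 0 := by linarith
    have e3 : a3 = 0 := by linarith
    have e4 : a4 = 1 := by linarith
    have hx : m = x4 := by rw [e1, e2, e3, e4] at hm; linarith
    refine ⟨1, m, m, by norm_num, le_refl 1, by ring, ?_⟩
    rw [e1, e2, e3, e4, hx]; ring_nf; norm_num
  · have hσne : a1 + a2 + a3 ≠ 0 := ne_of_gt hσ
    obtain ⟨θ₁, p, q, c0, c1, c2, c3⟩ :=
      reduce3 f x1 x2 x3 ((a1 * x1 + a2 * x2 + a3 * x3) / (a1 + a2 + a3))
        (a1 / (a1 + a2 + a3)) (a2 / (a1 + a2 + a3)) (a3 / (a1 + a2 + a3))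
        (div_nonneg h1 hσ.le) (div_nonneg h2 hσ.le) (div_nonneg h3 hσ.le)
        (by field_simp) (by field_simp)
    have hσm : (a1 + a2 + a3) * ((a1 * x1 + a2 * x2 + a3 * x3) / (a1 + a2 + a3))
        = a1 * x1 + a2 * x2 + a3 * x3 := mul_div_cancel₀ _ hσne
    obtain ⟨θ, a, b, d0, d1, d2, d3⟩ :=
      reduce3 f p q x4 m ((a1 + a2 + a3) * θ₁) ((a1 + a2 + a3) * (1 - θ₁)) a4
        (mul_nonneg hσ.le c0) (mul_nonneg hσ.le (by linarith)) h4
        (by linear_combination hsum) (by linear_combination (a1 + a2 + a3) * c2 + hσm + hm)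
    refine ⟨θ, a, b, d0, d1, d2, ?_⟩
    have c3' : (a1 + a2 + a3) * (θ₁ * f p + (1 - θ₁) * f q)
        ≤ a1 * f x1 + a2 * f x2 + a3 * f x3 := by
      have h := mul_le_mul_of_nonneg_left c3 hσ.le
      have e : (a1 + a2 + a3) * (a1 / (a1 + a2 + a3) * f x1 + a2 / (a1 + a2 + a3) * f x2
          + a3 / (a1 + a2 + a3) * f x3) = a1 * f x1 + a2 * f x2 + a3 * f x3 := by
        field_simp
      linarith [e ▸ h]
    have ee : (a1 + a2 + a3) * θ₁ * f p + (a1 + a2 + a3) * (1 - θ₁) * f q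
        = (a1 + a2 + a3) * (θ₁ * f p + (1 - θ₁) * f q) := by ring
    linarith [d3, c3', ee]

lemma affine_convexOn (a b : ℝ) : ConvexOn ℝ Set.univ (fun x : ℝ => a * x + b) := by
  refine ⟨convex_univ, fun x _ y _ s t hs ht hst => ?_⟩
  simp only [smul_eq_mul]
  exact le_of_eq (by linear_combination (-b) * hst)

variable {f : ℝ → ℝ} {a₀ b₀ : ℝ}

lemma envSet_nonempty (hmin : ∀ x, a₀ * x + b₀ ≤ f x) (m : ℝ) :
    Set.Nonempty {y : ℝ | ∃ g : ℝ → ℝ, ConvexOn ℝ Set.univ g ∧ (∀ x, g x ≤ f x) ∧ y = g m} :=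
  ⟨a₀ * m + b₀, ⟨fun x => a₀ * x + b₀, affine_convexOn a₀ b₀, hmin, rfl⟩⟩

lemma envSet_bddAbove (m : ℝ) :
    BddAbove {y : ℝ | ∃ g : ℝ → ℝ, ConvexOn ℝ Set.univ g ∧ (∀ x, g x ≤ f x) ∧ y = g m} := by
  refine ⟨f m, fun y hy => ?_⟩
  obtain ⟨g, _, hgf, rfl⟩ := hy
  exact hgf m

lemma convEnv_le (hmin : ∀ x, a₀ * x + b₀ ≤ f x) (m : ℝ) : convEnv f m ≤ f m :=
  csSup_le (envSet_nonempty hmin m) (fun y hy => by obtain ⟨g, _, hgf, rfl⟩ := hy; exact hgf m)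

lemma le_convEnv {g : ℝ → ℝ} (hg : ConvexOn ℝ Set.univ g) (hgf : ∀ x, g x ≤ f x) (m : ℝ) :
    g m ≤ convEnv f m :=
  le_csSup (envSet_bddAbove m) ⟨g, hg, hgf, rfl⟩

lemma convEnv_affine_minorant (hmin : ∀ x, a₀ * x + b₀ ≤ f x) (m : ℝ) :
    a₀ * m + b₀ ≤ convEnv f m :=
  le_convEnv (affine_convexOn a₀ b₀) hmin m

lemma convEnv_convexOn (hmin : ∀ x, a₀ * x + b₀ ≤ f x) :
    ConvexOn ℝ Set.univ (convEnv f) := by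
  refine ⟨convex_univ, fun x _ y _ s t hs ht hst => ?_⟩
  refine csSup_le (envSet_nonempty hmin _) ?_
  rintro z ⟨g, hg, hgf, rfl⟩
  calc g (s • x + t • y) ≤ s • g x + t • g y :=
        hg.2 (Set.mem_univ x) (Set.mem_univ y) hs ht hst
    _ ≤ s • convEnv f x + t • convEnv f y := by
        simp only [smul_eq_mul]
        gcongr <;> [exact le_convEnv hg hgf x; exact le_convEnv hg hgf y]

lemma convEnv_continuous (hmin : ∀ x, a₀ * x + b₀ ≤ f x) : Continuous (convEnv f) := by
  have h := (convEnv_convexOn hmin).continuousOn_interior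
  rw [interior_univ] at h
  exact continuousOn_univ.1 h

def comboSet (f : ℝ → ℝ) (m : ℝ) : Set ℝ :=
  {v | ∃ θ a b : ℝ, 0 ≤ θ ∧ θ ≤ 1 ∧ θ * a + (1 - θ) * b = m ∧ v = θ * f a + (1 - θ) * f b}

lemma comboSet_self_mem (f : ℝ → ℝ) (m : ℝ) : f m ∈ comboSet f m :=
  ⟨1, m, m, by norm_num, le_refl 1, by ring, by ring⟩

lemma comboSet_lb (hmin : ∀ x, a₀ * x + b₀ ≤ f x) (m : ℝ) :
    ∀ v ∈ comboSet f m, a₀ * m + b₀ ≤ v := by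
  rintro v ⟨θ, a, b, hθ0, hθ1, hcomb, rfl⟩
  have hA := mul_le_mul_of_nonneg_left (hmin a) hθ0
  have hB := mul_le_mul_of_nonneg_left (hmin b) (by linarith : (0:ℝ) ≤ 1 - θ)
  have hkey : θ * (a₀ * a + b₀) + (1 - θ) * (a₀ * b + b₀) = a₀ * m + b₀ := by
    linear_combination a₀ * hcomb
  linarith

lemma comboSet_bddBelow (hmin : ∀ x, a₀ * x + b₀ ≤ f x) (m : ℝ) :
    BddBelow (comboSet f m) :=
  ⟨a₀ * m + b₀, comboSet_lb hmin m⟩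

lemma comboInf_convexOn (hmin : ∀ x, a₀ * x + b₀ ≤ f x) :
    ConvexOn ℝ Set.univ (fun m => sInf (comboSet f m)) := by
  refine ⟨convex_univ, fun x _ y _ s t hs ht hst => ?_⟩
  simp only [smul_eq_mul]
  refine le_of_forall_pos_le_add (fun ε hε => ?_)
  obtain ⟨v1, hv1m, hv1⟩ := exists_lt_of_csInf_lt ⟨f x, comboSet_self_mem f x⟩
    (lt_add_of_pos_right _ hε : sInf (comboSet f x) < sInf (comboSet f x) + ε)
  obtain ⟨v2, hv2m, hv2⟩ := exists_lt_of_csInf_lt ⟨f y, comboSet_self_mem f y⟩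
    (lt_add_of_pos_right _ hε : sInf (comboSet f y) < sInf (comboSet f y) + ε)
  obtain ⟨θ1, p1, q1, e10, e11, e12, rfl⟩ := hv1m
  obtain ⟨θ2, p2, q2, e20, e21, e22, rfl⟩ := hv2m
  obtain ⟨θ, a, b, d0, d1, d2, d3⟩ :=
    reduce4 f p1 q1 p2 q2 (s * x + t * y) (s * θ1) (s * (1 - θ1)) (t * θ2) (t * (1 - θ2))
      (mul_nonneg hs e10) (mul_nonneg hs (by linarith)) (mul_nonneg ht e20)
      (mul_nonneg ht (by linarith)) (by linear_combination hst)
      (by linear_combination s * e12 + t * e22)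
  have hmem : θ * f a + (1 - θ) * f b ∈ comboSet f (s * x + t * y) :=
    ⟨θ, a, b, d0, d1, d2, rfl⟩
  have h1 : sInf (comboSet f (s * x + t * y)) ≤ θ * f a + (1 - θ) * f b :=
    csInf_le (comboSet_bddBelow hmin _) hmem
  have h2 := mul_le_mul_of_nonneg_left hv1.le hs
  have h3 := mul_le_mul_of_nonneg_left hv2.le ht
  have h4 : s * (sInf (comboSet f x) + ε) + t * (sInf (comboSet f y) + ε)
      = s * sInf (comboSet f x) + t * sInf (comboSet f y) + ε := by
    linear_combination ε * hst
  nlinarith [d3]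

lemma combo_lt_env_add (hmin : ∀ x, a₀ * x + b₀ ≤ f x) (m ε : ℝ) (hε : 0 < ε) :
    ∃ θ a b : ℝ, 0 ≤ θ ∧ θ ≤ 1 ∧ θ * a + (1 - θ) * b = m ∧
      θ * f a + (1 - θ) * f b < convEnv f m + ε := by
  have hhle : ∀ z, sInf (comboSet f z) ≤ f z :=
    fun z => csInf_le (comboSet_bddBelow hmin z) (comboSet_self_mem f z)
  have hle_env : sInf (comboSet f m) ≤ convEnv f m :=
    le_convEnv (comboInf_convexOn hmin) hhle m
  obtain ⟨v, hvm, hv⟩ := exists_lt_of_csInf_lt ⟨f m, comboSet_self_mem f m⟩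
    (by linarith : sInf (comboSet f m) < convEnv f m + ε)
  obtain ⟨θ, a, b, h0, h1, h2, rfl⟩ := hvm
  exact ⟨θ, a, b, h0, h1, h2, hv⟩

lemma unitBox_measurable (d : ℕ) : MeasurableSet (unitBox d) :=
  MeasurableSet.univ_pi (fun _ => measurableSet_Ico)

lemma unitBox_volume (d : ℕ) : volume (unitBox d) = 1 := by
  rw [unitBox, volume_pi_pi]
  have : ∀ _i : Fin d, volume (Set.Ico (-(1/2) : ℝ) (1/2)) = 1 := by
    intro i; rw [Real.volume_Ico]; norm_num
  simp [Real.volume_Ico]; norm_num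

lemma volume_unitBox_inter_lt (d : ℕ) (i0 : Fin d) (c : ℝ) (h1 : -(1/2) ≤ c) (h2 : c ≤ 1/2) :
    volume (unitBox d ∩ {x | x i0 < c}) = ENNReal.ofReal (c + 1/2) := by
  have hset : unitBox d ∩ {x | x i0 < c}
      = Set.univ.pi (fun i => if i = i0 then Set.Ico (-(1/2) : ℝ) c
          else Set.Ico (-(1/2) : ℝ) (1/2)) := by
    ext x
    simp only [unitBox, Set.mem_inter_iff, Set.mem_pi, Set.mem_univ, true_implies,
      Set.mem_setOf_eq, Set.mem_Ico]
    constructor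
    · rintro ⟨hall, hlt⟩ i
      by_cases hi : i = i0
      · subst hi; rw [if_pos rfl]; exact ⟨(hall i).1, hlt⟩
      · rw [if_neg hi]; exact hall i
    · intro hall
      refine ⟨fun i => ?_, ?_⟩
      · by_cases hi : i = i0
        · subst hi; have := hall i; rw [if_pos rfl] at this
          exact ⟨this.1, lt_of_lt_of_le this.2 h2⟩
        · have := hall i; rwa [if_neg hi] at this
      · have := hall i0; rw [if_pos rfl] at this; exact this.2
  rw [hset, volume_pi_pi]
  rw [Finset.prod_eq_single i0]
  · rw [if_pos rfl, Real.volume_Ico]; congr 1; ring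
  · intro j _ hj; rw [if_neg hj, Real.volume_Ico]; norm_num
  · intro h; exact absurd (Finset.mem_univ i0) h

lemma volume_unitBox_inter_ge (d : ℕ) (i0 : Fin d) (c : ℝ) (h1 : -(1/2) ≤ c) (h2 : c ≤ 1/2) :
    volume (unitBox d ∩ {x | ¬ x i0 < c}) = ENNReal.ofReal (1/2 - c) := by
  have hset : unitBox d ∩ {x | ¬ x i0 < c}
      = Set.univ.pi (fun i => if i = i0 then Set.Ico c (1/2 : ℝ)
          else Set.Ico (-(1/2) : ℝ) (1/2)) := by
    ext x
    simp only [unitBox, Set.mem_inter_iff, Set.mem_pi, Set.mem_univ, true_implies,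
      Set.mem_setOf_eq, Set.mem_Ico, not_lt]
    constructor
    · rintro ⟨hall, hge⟩ i
      by_cases hi : i = i0
      · subst hi; rw [if_pos rfl]; exact ⟨hge, (hall i).2⟩
      · rw [if_neg hi]; exact hall i
    · intro hall
      refine ⟨fun i => ?_, ?_⟩
      · by_cases hi : i = i0
        · subst hi; have := hall i; rw [if_pos rfl] at this
          exact ⟨le_trans h1 this.1, this.2⟩
        · have := hall i; rwa [if_neg hi] at this
      · have := hall i0; rw [if_pos rfl] at this; exact this.1
  rw [hset, volume_pi_pi]
  rw [Finset.prod_eq_single i0]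
  · rw [if_pos rfl, Real.volume_Ico]
  · intro j _ hj; rw [if_neg hj, Real.volume_Ico]; norm_num
  · intro h; exact absurd (Finset.mem_univ i0) h

lemma integral_ite_box (d : ℕ) (i0 : Fin d) (θ u v : ℝ) (hθ0 : 0 ≤ θ) (hθ1 : θ ≤ 1) :
    IntegrableOn (fun x : Fin d → ℝ => if x i0 < θ - 1/2 then u else v) (unitBox d) ∧
    (∫ x in unitBox d, (if x i0 < θ - 1/2 then u else v)) = θ * u + (1 - θ) * v := by
  set c : ℝ := θ - 1/2 with hc
  have hc1 : -(1/2) ≤ c := by rw [hc]; linarith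
  have hc2 : c ≤ 1/2 := by rw [hc]; linarith
  have hTmeas : MeasurableSet {x : Fin d → ℝ | x i0 < c} :=
    measurableSet_lt (measurable_pi_apply i0) measurable_const
  have hmeas : Measurable (fun x : Fin d → ℝ => if x i0 < c then u else v) :=
    Measurable.ite hTmeas measurable_const measurable_const
  have hvol : volume (unitBox d) < ⊤ := by rw [unitBox_volume]; exact ENNReal.one_lt_top
  have hfin : IsFiniteMeasure (volume.restrict (unitBox d)) :=
    ⟨by rwa [Measure.restrict_apply_univ]⟩
  have hint : IntegrableOn (fun x : Fin d → ℝ => if x i0 < c then u else v) (unitBox d) := by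
    refine Integrable.mono' (integrable_const (max |u| |v|)) hmeas.aestronglyMeasurable ?_
    refine ae_of_all _ (fun x => ?_)
    rw [Real.norm_eq_abs]
    split
    · exact le_max_left _ _
    · exact le_max_right _ _
  refine ⟨hint, ?_⟩
  have hsplit : unitBox d = (unitBox d ∩ {x | x i0 < c}) ∪ (unitBox d ∩ {x | x i0 < c}ᶜ) :=
    (Set.inter_union_compl _ _).symm
  have hdisj : Disjoint (unitBox d ∩ {x | x i0 < c}) (unitBox d ∩ {x | x i0 < c}ᶜ) :=
    Disjoint.mono Set.inter_subset_right Set.inter_subset_right disjoint_compl_right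
  have hmeasC : MeasurableSet (unitBox d ∩ {x | x i0 < c}ᶜ) :=
    (unitBox_measurable d).inter hTmeas.compl
  calc (∫ x in unitBox d, (if x i0 < c then u else v))
      = (∫ x in (unitBox d ∩ {x | x i0 < c}) ∪ (unitBox d ∩ {x | x i0 < c}ᶜ),
          (if x i0 < c then u else v)) := by rw [← hsplit]
    _ = (∫ x in unitBox d ∩ {x | x i0 < c}, (if x i0 < c then u else v))
        + (∫ x in unitBox d ∩ {x | x i0 < c}ᶜ, (if x i0 < c then u else v)) := by
        refine setIntegral_union hdisj hmeasC ?_ ?_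
        · exact hint.mono_set Set.inter_subset_left
        · exact hint.mono_set Set.inter_subset_left
    _ = θ * u + (1 - θ) * v := by
        have e1 : (∫ x in unitBox d ∩ {x | x i0 < c}, (if x i0 < c then u else v))
            = (∫ _x in unitBox d ∩ {x | x i0 < c}, u) := by
          refine setIntegral_congr_fun ((unitBox_measurable d).inter hTmeas) (fun x hx => ?_)
          exact if_pos hx.2
        have e2 : (∫ x in unitBox d ∩ {x | x i0 < c}ᶜ, (if x i0 < c then u else v))
            = (∫ _x in unitBox d ∩ {x | x i0 < c}ᶜ, v) := by
          refine setIntegral_congr_fun hmeasC (fun x hx => ?_)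
          exact if_neg hx.2
        rw [e1, e2, setIntegral_const, setIntegral_const]
        have hv1 : volume (unitBox d ∩ {x | x i0 < c}) = ENNReal.ofReal θ := by
          rw [volume_unitBox_inter_lt d i0 c hc1 hc2]; congr 1; rw [hc]; ring
        have hv2 : volume (unitBox d ∩ {x | x i0 < c}ᶜ) = ENNReal.ofReal (1 - θ) := by
          have : {x : Fin d → ℝ | x i0 < c}ᶜ = {x : Fin d → ℝ | ¬ x i0 < c} := rfl
          rw [this, volume_unitBox_inter_ge d i0 c hc1 hc2]; congr 1; rw [hc]; ring
        rw [measureReal_def, measureReal_def, hv1, hv2, ENNReal.toReal_ofReal hθ0, ENNReal.toReal_ofReal (by linarith)]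
        simp [smul_eq_mul]

/-- The infimum of `∫ f(m(x)) dx` over integrable profiles `m` on the torus with
mean `m̄` equals the convex envelope `f**(m̄)`. -/
theorem stmt14 (d : ℕ) (hd : 0 < d) (f : ℝ → ℝ) (hf : Continuous f)
    (hmin : ∃ a b : ℝ, ∀ m, a * m + b ≤ f m) (mbar : ℝ) :
    sInf {y : ℝ | ∃ m : (Fin d → ℝ) → ℝ,
        IntegrableOn m (unitBox d) ∧ IntegrableOn (fun x => f (m x)) (unitBox d) ∧
        (∫ x in unitBox d, m x) = mbar ∧ y = ∫ x in unitBox d, f (m x)}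
      = convEnv f mbar := by
  obtain ⟨a₀, b₀, hmin⟩ := hmin
  have hvol : volume (unitBox d) < ⊤ := by rw [unitBox_volume]; exact ENNReal.one_lt_top
  have hprob : IsProbabilityMeasure (volume.restrict (unitBox d)) :=
    ⟨by rw [Measure.restrict_apply_univ]; exact unitBox_volume d⟩
  set P : Set ℝ := {y : ℝ | ∃ m : (Fin d → ℝ) → ℝ,
      IntegrableOn m (unitBox d) ∧ IntegrableOn (fun x => f (m x)) (unitBox d) ∧
      (∫ x in unitBox d, m x) = mbar ∧ y = ∫ x in unitBox d, f (m x)} with hP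
  -- nonemptiness via the constant profile
  have hPne : P.Nonempty := by
    refine ⟨f mbar, fun _ => mbar, ?_, ?_, ?_, ?_⟩
    · exact integrable_const mbar
    · exact integrable_const (f mbar)
    · rw [setIntegral_const, measureReal_def, unitBox_volume]; simp
    · rw [setIntegral_const, measureReal_def, unitBox_volume]; simp
  -- every element of P is at least `convEnv f mbar`
  have henv_cont : Continuous (convEnv f) := convEnv_continuous hmin
  have hlb : ∀ y ∈ P, convEnv f mbar ≤ y := by
    rintro y ⟨m, hm1, hm2, hm3, rfl⟩
    have hintenv : Integrable (fun x => convEnv f (m x)) (volume.restrict (unitBox d)) := by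
      refine Integrable.mono' ((hm2.abs).add ((hm1.const_mul a₀).add (integrable_const b₀)).abs)
        (henv_cont.comp_aestronglyMeasurable hm1.aestronglyMeasurable) ?_
      refine ae_of_all _ (fun x => ?_)
      rw [Real.norm_eq_abs, abs_le]
      simp only [Pi.add_apply]
      constructor
      · have h1 : a₀ * m x + b₀ ≤ convEnv f (m x) := convEnv_affine_minorant hmin (m x)
        have h2 : -(|a₀ * m x + b₀|) ≤ a₀ * m x + b₀ := neg_abs_le _
        have h3 : (0:ℝ) ≤ |f (m x)| := abs_nonneg _
        linarith
      · have h1 : convEnv f (m x) ≤ f (m x) := convEnv_le hmin (m x)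
        have h2 : f (m x) ≤ |f (m x)| := le_abs_self _
        have h3 : (0:ℝ) ≤ |a₀ * m x + b₀| := abs_nonneg _
        linarith
    have hJ : convEnv f (∫ x in unitBox d, m x) ≤ ∫ x in unitBox d, convEnv f (m x) :=
      (convEnv_convexOn hmin).map_integral_le henv_cont.continuousOn isClosed_univ
        (ae_of_all _ fun x => Set.mem_univ _) hm1 hintenv
    have hmono : (∫ x in unitBox d, convEnv f (m x)) ≤ ∫ x in unitBox d, f (m x) :=
      integral_mono hintenv hm2 (fun x => convEnv_le hmin (m x))
    rw [hm3] at hJ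
    linarith
  refine le_antisymm ?_ (le_csInf hPne hlb)
  -- upper bound: build two-valued profiles from near-optimal two-point combinations
  refine le_of_forall_pos_le_add (fun ε hε => ?_)
  obtain ⟨θ, a, b, h0, h1, h2, h3⟩ := combo_lt_env_add hmin mbar ε hε
  have i0 : Fin d := ⟨0, hd⟩
  obtain ⟨hint_m, hval_m⟩ := integral_ite_box d i0 θ a b h0 h1
  obtain ⟨hint_f, hval_f⟩ := integral_ite_box d i0 θ (f a) (f b) h0 h1
  have hfe : (fun x : Fin d → ℝ => f (if x i0 < θ - 1/2 then a else b))
      = (fun x : Fin d → ℝ => if x i0 < θ - 1/2 then f a else f b) := by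
    funext x; exact apply_ite f _ a b
  have hmem : (θ * f a + (1 - θ) * f b) ∈ P := by
    refine ⟨fun x => if x i0 < θ - 1/2 then a else b, hint_m, ?_, ?_, ?_⟩
    · rw [hfe]; exact hint_f
    · rw [hval_m]; exact h2
    · rw [hfe, hval_f]
  have := csInf_le ⟨convEnv f mbar, hlb⟩ hmem
  linarith
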